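/- Let n ≥ 2 and c = (4n² - 4n - 3)/(4(2n-1)). Then log(n²) - log 10 ≤ log((1 + (n-1/2)²)/(1 + (2c - (n-1/2))²)) ≤ log(n²). -/

import Mathlib

theorem log_distance_estimate (n : ℕ) (hn : 2 ≤ n) (c : ℝ)
    (hc : c = (4 * (n : ℝ) ^ 2 - 4 * n - 3) / (4 * (2 * n - 1))) :
    Real.log ((n : ℝ) ^ 2) - Real.log 10 ≤
        Real.log ((1 + ((n : ℝ) - 1 / 2) ^ 2) / (1 + (2 * c - ((n : ℝ) - 1 / 2)) ^ 2)) ∧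
      Real.log ((1 + ((n : ℝ) - 1 / 2) ^ 2) / (1 + (2 * c - ((n : ℝ) - 1 / 2)) ^ 2)) ≤
        Real.log ((n : ℝ) ^ 2) := by
  have ht : (2 : ℝ) ≤ (n : ℝ) := by exact_mod_cast hn
  have hd : (2 * (n : ℝ) - 1) ≠ 0 := by nlinarith
  have hden : (0 : ℝ) < 1 + (2 * c - ((n : ℝ) - 1 / 2)) ^ 2 := by positivity
  have h1 : (1 + ((n : ℝ) - 1 / 2) ^ 2) / (1 + (2 * c - ((n : ℝ) - 1 / 2)) ^ 2)
      = (2 * (n : ℝ) - 1) ^ 2 / 4 := by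
    rw [hc] at hden ⊢
    rw [div_eq_div_iff hden.ne' (by norm_num)]
    have hd2 : (n : ℝ) * 2 - 1 ≠ 0 := by intro h; apply hd; linarith
    field_simp
    ring
  rw [h1]
  constructor
  · rw [show Real.log ((n : ℝ) ^ 2) - Real.log 10 = Real.log ((n : ℝ) ^ 2 / 10) by
      rw [Real.log_div (by positivity) (by norm_num)]]
    apply Real.log_le_log (by positivity)
    rw [div_le_div_iff₀ (by norm_num) (by norm_num)]
    nlinarith
  · apply Real.log_le_log (by positivity)
    rw [div_le_iff₀ (by norm_num)]
    nlinarith
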